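/- Let ℓ > 0 and for each k let X^k be a finite subset of the closed interval [0,ℓ] (with the metric induced from ℝ) such that X^k converges to [0,ℓ] in the Hausdorff metric as k → ∞. Then the magnitude |X^k| is defined for every k and |X^k| → ℓ/2 + 1 as k → ∞. -/

import Mathlib

open Filter Topology



noncomputable def gg (d : ℝ) : ℝ := (Real.exp d - 1) / (Real.exp d + 1)

lemma gexp_pos (d : ℝ) : (0:ℝ) < Real.exp d + 1 := by positivity

lemma k1 (d : ℝ) : (gg d - 1) + Real.exp (-d) * (gg d + 1) = 0 := by
  have h : Real.exp d + 1 ≠ 0 := (gexp_pos d).ne'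
  have he : Real.exp d ≠ 0 := (Real.exp_pos d).ne'
  rw [gg, Real.exp_neg]
  field_simp
  ring

lemma k2 (d : ℝ) : Real.exp (-d) * ((1 + gg d)/2) + (1 + gg d)/2 = 1 := by
  have h : Real.exp d + 1 ≠ 0 := (gexp_pos d).ne'
  have he : Real.exp d ≠ 0 := (Real.exp_pos d).ne'
  rw [gg, Real.exp_neg]
  field_simp
  ring


lemma nonneg_of_deriv {f f' : ℝ → ℝ} (hd : ∀ x, HasDerivAt f (f' x) x) (h0 : f 0 = 0)
    (hf' : ∀ x, 0 ≤ x → 0 ≤ f' x) : ∀ x, 0 ≤ x → 0 ≤ f x := by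
  intro x hx
  have mono : MonotoneOn f (Set.Ici 0) := by
    apply monotoneOn_of_deriv_nonneg (convex_Ici 0)
    · exact fun y _ => (hd y).continuousAt.continuousWithinAt
    · exact fun y _ => (hd y).differentiableAt.differentiableWithinAt
    · intro y hy
      rw [(hd y).deriv]
      rw [interior_Ici] at hy
      exact hf' y (le_of_lt hy)
  have := mono (Set.self_mem_Ici) (Set.mem_Ici.2 hx) hx
  linarith [h0 ▸ this]



lemma aux1 : ∀ d : ℝ, 0 ≤ d → 0 ≤ d * Real.exp d - Real.exp d + 1 := by
  apply nonneg_of_deriv (f' := fun d => d * Real.exp d)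
  · intro x
    have h := (((hasDerivAt_id x).mul (Real.hasDerivAt_exp x)).sub (Real.hasDerivAt_exp x)).add_const 1
    refine h.congr_deriv ?_
    try simp only [id_eq]
    ring
  · simp
  · intro x hx; positivity

lemma aux2 : ∀ d : ℝ, 0 ≤ d → 0 ≤ d * (Real.exp d + 1) - 2 * Real.exp d + 2 := by
  apply nonneg_of_deriv (f' := fun d => d * Real.exp d - Real.exp d + 1)
  · intro x
    have h := (((hasDerivAt_id x).mul ((Real.hasDerivAt_exp x).add_const 1)).sub
      ((Real.hasDerivAt_exp x).const_mul 2)).add_const 2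
    refine h.congr_deriv ?_
    try simp only [id_eq]
    ring
  · simp
  · exact aux1

lemma gexp_pos' (d : ℝ) : (0:ℝ) < Real.exp d + 1 := by positivity

lemma gg_le (d : ℝ) (hd : 0 ≤ d) : gg d ≤ d / 2 := by
  rw [gg, div_le_div_iff₀ (gexp_pos' d) two_pos]
  nlinarith [aux2 d hd]

lemma aux3 : ∀ d : ℝ, 0 ≤ d →
    0 ≤ Real.exp d * (4 + 3 * d^2 - 4 * d + d^3) + 3 * d^2 - 4 := by
  apply nonneg_of_deriv (f' := fun d => Real.exp d * (d^3 + 6 * d^2 + 2 * d) + 6 * d)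
  · intro x
    have hp : HasDerivAt (fun d : ℝ => 4 + 3 * d^2 - 4 * d + d^3)
        (3 * (2 * x) - 4 + 3 * x^2) x := by
      have := ((((hasDerivAt_pow 2 x).const_mul 3).const_add 4).sub
        ((hasDerivAt_id x).const_mul 4)).add (hasDerivAt_pow 3 x)
      refine this.congr_deriv ?_
      ring
    have h := (((Real.hasDerivAt_exp x).mul hp).add ((hasDerivAt_pow 2 x).const_mul 3)).sub_const 4
    refine h.congr_deriv ?_
    try simp only [id_eq]
    ring
  · simp
  · intro x hx
    have h1 : 0 ≤ x^3 + 6 * x^2 + 2 * x := by nlinarith [pow_nonneg hx 3, pow_nonneg hx 2]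
    nlinarith [mul_nonneg (Real.exp_pos x).le h1]
lemma aux4 : ∀ d : ℝ, 0 ≤ d →
    0 ≤ 8 * (Real.exp d - 1) - (4 * d - d^3) * (Real.exp d + 1) := by
  apply nonneg_of_deriv
    (f' := fun d => Real.exp d * (4 + 3 * d^2 - 4 * d + d^3) + 3 * d^2 - 4)
  · intro x
    have hp : HasDerivAt (fun d : ℝ => 4 * d - d^3) (4 - 3 * x^2) x := by
      have := ((hasDerivAt_id x).const_mul 4).sub (hasDerivAt_pow 3 x)
      refine this.congr_deriv ?_
      ring
    have h := (((Real.hasDerivAt_exp x).sub_const 1).const_mul 8).sub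
      (hp.mul ((Real.hasDerivAt_exp x).add_const 1))
    refine h.congr_deriv ?_
    try simp only [id_eq]
    ring
  · simp
  · exact aux3

lemma gg_ge (d : ℝ) (hd : 0 ≤ d) : d / 2 - d^3 / 8 ≤ gg d := by
  rw [gg, le_div_iff₀ (gexp_pos' d)]
  nlinarith [aux4 d hd]




noncomputable def upv (s : Finset ℝ) (x : ℝ) : ℝ :=
  if h : (s.filter (fun y => x < y)).Nonempty
    then gg ((s.filter (fun y => x < y)).min' h - x) else 1

noncomputable def dnv (s : Finset ℝ) (x : ℝ) : ℝ :=
  if h : (s.filter (fun y => y < x)).Nonempty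
    then gg (x - (s.filter (fun y => y < x)).max' h) else 1

noncomputable def wt (s : Finset ℝ) (x : ℝ) : ℝ := (upv s x + dnv s x) / 2

lemma wt_singleton (a : ℝ) : wt {a} a = 1 := by
  simp [wt, upv, dnv, Finset.filter_singleton]

section insertmax
variable {a : ℝ} {s : Finset ℝ} (hmax : ∀ x ∈ s, x < a) (hs : s.Nonempty)

include hmax in
lemma dnv_insert_mem {y : ℝ} (hy : y ∈ s) : dnv (insert a s) y = dnv s y := by
  have : (insert a s).filter (fun z => z < y) = s.filter (fun z => z < y) := by
    rw [Finset.filter_insert, if_neg (not_lt.2 (hmax y hy).le)]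
  rw [dnv, dnv, this]

include hmax hs in
lemma upv_insert_max : upv (insert a s) (s.max' hs) = gg (a - s.max' hs) := by
  have hemp : s.filter (fun z => s.max' hs < z) = ∅ :=
    Finset.filter_eq_empty_iff.2 fun z hz => not_lt.2 (Finset.le_max' s z hz)
  have : (insert a s).filter (fun z => s.max' hs < z) = {a} := by
    rw [Finset.filter_insert, if_pos (hmax _ (Finset.max'_mem s hs)), hemp]
    rfl
  rw [upv, this, dif_pos (Finset.singleton_nonempty a), Finset.min'_singleton]

include hmax hs in
lemma upv_insert_mem {y : ℝ} (hy : y ∈ s) (hym : y ≠ s.max' hs) :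
    upv (insert a s) y = upv s y := by
  have hylt : y < s.max' hs := lt_of_le_of_ne (Finset.le_max' s y hy) hym
  have hne : (s.filter (fun z => y < z)).Nonempty :=
    ⟨s.max' hs, Finset.mem_filter.2 ⟨Finset.max'_mem s hs, hylt⟩⟩
  have hins : (insert a s).filter (fun z => y < z) = insert a (s.filter (fun z => y < z)) := by
    rw [Finset.filter_insert, if_pos (hmax y hy)]
  have hmin : (insert a (s.filter (fun z => y < z))).min' (Finset.insert_nonempty _ _)
      = (s.filter (fun z => y < z)).min' hne := by
    rw [Finset.min'_insert a _ hne]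
    refine min_eq_right ?_
    have : (s.filter (fun z => y < z)).min' hne ∈ s :=
      Finset.mem_of_mem_filter _ ((s.filter (fun z => y < z)).min'_mem hne)
    exact (hmax _ this).le
  rw [upv, upv, hins, dif_pos (Finset.insert_nonempty _ _), dif_pos hne, hmin]

include hmax in
lemma upv_insert_self : upv (insert a s) a = 1 := by
  have : (insert a s).filter (fun z => a < z) = ∅ := by
    rw [Finset.filter_insert, if_neg (lt_irrefl a)]
    exact Finset.filter_eq_empty_iff.2 fun z hz => not_lt.2 (hmax z hz).le
  rw [upv, this, dif_neg (by simp)]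

include hmax hs in
lemma dnv_insert_self : dnv (insert a s) a = gg (a - s.max' hs) := by
  have : (insert a s).filter (fun z => z < a) = s := by
    rw [Finset.filter_insert, if_neg (lt_irrefl a)]
    exact Finset.filter_true_of_mem hmax
  rw [dnv, this, dif_pos hs]

include hmax hs in
lemma wt_insert_mem {y : ℝ} (hy : y ∈ s) :
    wt (insert a s) y
      = wt s y + (if y = s.max' hs then (gg (a - s.max' hs) - 1) / 2 else 0) := by
  by_cases hym : y = s.max' hs
  · subst hym
    have hemp : s.filter (fun z => s.max' hs < z) = ∅ :=
      Finset.filter_eq_empty_iff.2 fun z hz => not_lt.2 (Finset.le_max' s z hz)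
    rw [wt, wt, upv_insert_max hmax hs, dnv_insert_mem hmax hy, if_pos rfl]
    rw [show upv s (s.max' hs) = 1 from by rw [upv, hemp, dif_neg (by simp)]]
    ring
  · rw [wt, wt, upv_insert_mem hmax hs hy hym, dnv_insert_mem hmax hy, if_neg hym]
    ring

include hmax hs in
lemma wt_insert_self' : wt (insert a s) a = (1 + gg (a - s.max' hs)) / 2 := by
  rw [wt, upv_insert_self hmax, dnv_insert_self hmax hs]

end insertmax



lemma hsum_aux {a : ℝ} {s : Finset ℝ} (hmax : ∀ x ∈ s, x < a) (hs : s.Nonempty) (x : ℝ) :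
    ∑ y ∈ s, Real.exp (-dist x y) * wt (insert a s) y
      = (∑ y ∈ s, Real.exp (-dist x y) * wt s y)
        + Real.exp (-dist x (s.max' hs)) * ((gg (a - s.max' hs) - 1) / 2) := by
  have step1 : ∀ y ∈ s, Real.exp (-dist x y) * wt (insert a s) y
      = Real.exp (-dist x y) * wt s y
        + (if y = s.max' hs
            then Real.exp (-dist x (s.max' hs)) * ((gg (a - s.max' hs) - 1) / 2) else 0) := by
    intro y hy
    rw [wt_insert_mem hmax hs hy, mul_add]
    congr 1
    by_cases h : y = s.max' hs
    · rw [if_pos h, if_pos h, h]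
    · rw [if_neg h, if_neg h, mul_zero]
  rw [Finset.sum_congr rfl step1, Finset.sum_add_distrib,
    Finset.sum_ite_eq' s (s.max' hs), if_pos (Finset.max'_mem s hs)]

lemma wt_spec (s : Finset ℝ) : ∀ x ∈ s, ∑ y ∈ s, Real.exp (-dist x y) * wt s y = 1 := by
  induction s using Finset.induction_on_max with
  | empty => intro x hx; simp at hx
  | insert a s hmax ih =>
    have ha : a ∉ s := fun h => lt_irrefl a (hmax a h)
    rcases s.eq_empty_or_nonempty with rfl | hs
    · intro x hx
      have hxa : x = a := by simpa using hx
      subst hxa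
      show ∑ y ∈ ({x} : Finset ℝ), Real.exp (-dist x y) * wt {x} y = 1
      rw [Finset.sum_singleton, dist_self, neg_zero, Real.exp_zero, one_mul, wt_singleton]
    · have hm : s.max' hs ∈ s := Finset.max'_mem s hs
      intro x hx
      rw [Finset.sum_insert ha]
      rcases Finset.mem_insert.1 hx with rfl | hxs
      · -- x = a
        have e2 : ∀ y ∈ s, Real.exp (-dist x y)
            = Real.exp (-(x - s.max' hs)) * Real.exp (-dist (s.max' hs) y) := by
          intro y hy
          rw [← Real.exp_add]
          congr 1
          rw [Real.dist_eq, Real.dist_eq,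
            abs_of_nonneg (by linarith [hmax y hy]),
            abs_of_nonneg (by linarith [Finset.le_max' s y hy])]
          ring
        have e3 : ∑ y ∈ s, Real.exp (-dist x y) * wt (insert x s) y
            = Real.exp (-(x - s.max' hs))
              * ∑ y ∈ s, Real.exp (-dist (s.max' hs) y) * wt (insert x s) y := by
          rw [Finset.mul_sum]
          refine Finset.sum_congr rfl fun y hy => ?_
          rw [e2 y hy, mul_assoc]
        rw [e3, hsum_aux hmax hs, ih _ hm, dist_self, neg_zero, Real.exp_zero, one_mul,
          dist_self, neg_zero, Real.exp_zero, one_mul, wt_insert_self' hmax hs]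
        linear_combination k2 (x - s.max' hs)
      · rw [hsum_aux hmax hs, ih x hxs, wt_insert_self' hmax hs]
        have e1 : Real.exp (-dist x a)
            = Real.exp (-dist x (s.max' hs)) * Real.exp (-(a - s.max' hs)) := by
          rw [← Real.exp_add]
          congr 1
          rw [Real.dist_eq, Real.dist_eq,
            abs_of_nonpos (by linarith [hmax x hxs]),
            abs_of_nonpos (by linarith [Finset.le_max' s x hxs])]
          ring
        rw [e1]
        linear_combination (Real.exp (-dist x (s.max' hs)) / 2) * k1 (a - s.max' hs)

lemma T_insert {a : ℝ} {s : Finset ℝ} (hmax : ∀ x ∈ s, x < a) (hs : s.Nonempty) :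
    ∑ x ∈ insert a s, wt (insert a s) x
      = (∑ x ∈ s, wt s x) + gg (a - s.max' hs) := by
  have ha : a ∉ s := fun h => lt_irrefl a (hmax a h)
  rw [Finset.sum_insert ha, wt_insert_self' hmax hs,
    Finset.sum_congr rfl (fun y hy => wt_insert_mem hmax hs hy), Finset.sum_add_distrib,
    Finset.sum_ite_eq' s (s.max' hs), if_pos (Finset.max'_mem s hs)]
  ring



lemma T_bounds (δ : ℝ) (hδ : 0 ≤ δ) (s : Finset ℝ) :
    ∀ (hne : s.Nonempty),
    (∀ x ∈ s, (∃ z ∈ s, x < z) → ∃ y ∈ s, x < y ∧ y - x ≤ δ) →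
    (s.max' hne - s.min' hne) / 2 * (1 - δ^2/4) ≤ (∑ x ∈ s, wt s x) - 1 ∧
    (∑ x ∈ s, wt s x) - 1 ≤ (s.max' hne - s.min' hne) / 2 := by
  induction s using Finset.induction_on_max with
  | empty => intro hne; exact absurd hne (by simp)
  | insert a s hmax ih =>
    intro hne hchain
    have ha : a ∉ s := fun h => lt_irrefl a (hmax a h)
    rcases s.eq_empty_or_nonempty with rfl | hs
    · have h1 : insert a (∅:Finset ℝ) = {a} := rfl
      simp only [h1, Finset.sum_singleton, wt_singleton, Finset.max'_singleton,
        Finset.min'_singleton, sub_self, zero_div, zero_mul]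
      norm_num
    · have hm : s.max' hs ∈ s := Finset.max'_mem s hs
      have chain_s : ∀ x ∈ s, (∃ z ∈ s, x < z) → ∃ y ∈ s, x < y ∧ y - x ≤ δ := by
        rintro x hx ⟨z, hz, hxz⟩
        obtain ⟨y, hy, h1, h2⟩ := hchain x (Finset.mem_insert_of_mem hx)
          ⟨z, Finset.mem_insert_of_mem hz, hxz⟩
        rcases Finset.mem_insert.1 hy with rfl | hys
        · exact ⟨s.max' hs, hm, lt_of_lt_of_le hxz (Finset.le_max' s z hz),
            by linarith [hmax _ hm]⟩
        · exact ⟨y, hys, h1, h2⟩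
      have hda : a - s.max' hs ≤ δ := by
        obtain ⟨y, hy, h1, h2⟩ := hchain (s.max' hs) (Finset.mem_insert_of_mem hm)
          ⟨a, Finset.mem_insert_self a s, hmax _ hm⟩
        rcases Finset.mem_insert.1 hy with rfl | hys
        · exact h2
        · exact absurd h1 (not_lt.2 (Finset.le_max' s y hys))
      obtain ⟨ihl, ihr⟩ := ih hs chain_s
      have hmaxins : (insert a s).max' hne = a := by
        rw [Finset.max'_insert a s hs]
        exact max_eq_left (hmax _ hm).le
      have hminins : (insert a s).min' hne = s.min' hs := by
        rw [Finset.min'_insert a s hs]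
        exact min_eq_right (by linarith [hmax _ (Finset.min'_mem s hs)])
      rw [T_insert hmax hs, hmaxins, hminins]
      have hd0 : 0 ≤ a - s.max' hs := by linarith [hmax _ hm]
      have hub := gg_le _ hd0
      have hlb := gg_ge _ hd0
      have hmm : s.min' hs ≤ s.max' hs := Finset.min'_le s _ hm
      have h2 : (a - s.max' hs)^2 ≤ δ^2 := by nlinarith
      have dcube : (a - s.max' hs)^3 ≤ (a - s.max' hs) * δ^2 := by
        nlinarith [mul_le_mul_of_nonneg_left h2 hd0]
      constructor
      · nlinarith
      · linarith

lemma total_eq (s : Finset ℝ) (w w' : ℝ → ℝ)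
    (hw : ∀ x ∈ s, ∑ y ∈ s, Real.exp (-dist x y) * w y = 1)
    (hw' : ∀ x ∈ s, ∑ y ∈ s, Real.exp (-dist x y) * w' y = 1) :
    ∑ x ∈ s, w x = ∑ x ∈ s, w' x := by
  calc ∑ x ∈ s, w x = ∑ x ∈ s, (∑ y ∈ s, Real.exp (-dist x y) * w' y) * w x := by
        refine Finset.sum_congr rfl fun x hx => ?_
        rw [hw' x hx, one_mul]
    _ = ∑ y ∈ s, (∑ x ∈ s, Real.exp (-dist y x) * w x) * w' y := by
        simp only [Finset.sum_mul]
        rw [Finset.sum_comm]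
        refine Finset.sum_congr rfl fun y _ => Finset.sum_congr rfl fun x _ => ?_
        rw [dist_comm]
        ring
    _ = ∑ y ∈ s, w' y := by
        refine Finset.sum_congr rfl fun y hy => ?_
        rw [hw y hy, one_mul]



/-- If `(X^k)` is a sequence of finite subsets of the interval `[0, ℓ]` converging to
`[0, ℓ]` in the Hausdorff metric, then each `X^k` has a weighting (so its magnitude is
defined), and the magnitudes converge to `ℓ/2 + 1`. -/
theorem magnitude_tendsto_interval (ℓ : ℝ) (hℓ : 0 < ℓ) (X : ℕ → Finset ℝ)
    (hsub : ∀ k, ↑(X k) ⊆ Set.Icc (0 : ℝ) ℓ)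
    (hconv : Tendsto (fun k => EMetric.hausdorffEdist (↑(X k) : Set ℝ) (Set.Icc (0 : ℝ) ℓ))
      atTop (𝓝 0)) :
    (∀ k, ∃ w : ℝ → ℝ, ∀ x ∈ X k, ∑ x' ∈ X k, Real.exp (-dist x x') * w x' = 1) ∧
    ∀ w : ℕ → ℝ → ℝ,
      (∀ k, ∀ x ∈ X k, ∑ x' ∈ X k, Real.exp (-dist x x') * w k x' = 1) →
      Tendsto (fun k => ∑ x ∈ X k, w k x) atTop (𝓝 (ℓ / 2 + 1)) := by
  constructor
  · exact fun k => ⟨wt (X k), wt_spec (X k)⟩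
  · intro w hw
    have htot : ∀ k, ∑ x ∈ X k, w k x = ∑ x ∈ X k, wt (X k) x :=
      fun k => total_eq _ _ _ (hw k) (wt_spec (X k))
    rw [show (fun k => ∑ x ∈ X k, w k x) = fun k => ∑ x ∈ X k, wt (X k) x from funext htot]
    rw [Metric.tendsto_atTop]
    intro η hη
    set ε := min (2/3) (η / (2 * (1 + ℓ))) with hε_def
    have hεle : ε ≤ 2/3 := min_le_left _ _
    have hεη : ε ≤ η / (2 * (1 + ℓ)) := min_le_right _ _
    have hε0 : 0 < ε := lt_min (by norm_num) (div_pos hη (by linarith))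
    have hev : ∀ᶠ k in atTop,
        EMetric.hausdorffEdist (↑(X k) : Set ℝ) (Set.Icc (0:ℝ) ℓ) < ENNReal.ofReal ε :=
      hconv.eventually (gt_mem_nhds (ENNReal.ofReal_pos.2 hε0))
    obtain ⟨N, hN⟩ := Filter.eventually_atTop.1 hev
    refine ⟨N, fun k hk => ?_⟩
    have hdense : ∀ t ∈ Set.Icc (0:ℝ) ℓ, ∃ y ∈ X k, dist t y < ε := by
      intro t ht
      obtain ⟨y, hy, hlt⟩ := EMetric.exists_edist_lt_of_hausdorffEdist_lt
        (s := Set.Icc (0:ℝ) ℓ) (t := (↑(X k) : Set ℝ)) ht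
        (by rw [EMetric.hausdorffEdist_comm]; exact hN k hk)
      exact ⟨y, hy, edist_lt_ofReal.1 hlt⟩
    obtain ⟨y0, hy0, hy0d⟩ := hdense 0 ⟨le_refl 0, hℓ.le⟩
    have hne : (X k).Nonempty := ⟨y0, hy0⟩
    have hsub' := hsub k
    have hm0 : 0 ≤ (X k).min' hne := (hsub' (Finset.mem_coe.2 ((X k).min'_mem hne))).1
    have hMℓ : (X k).max' hne ≤ ℓ := (hsub' (Finset.mem_coe.2 ((X k).max'_mem hne))).2
    have hmε : (X k).min' hne ≤ ε := by
      have h0 : (0:ℝ) ≤ y0 := (hsub' (Finset.mem_coe.2 hy0)).1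
      have := Finset.min'_le (X k) y0 hy0
      rw [Real.dist_eq, abs_of_nonpos (by linarith)] at hy0d
      linarith
    have hMε : ℓ - ε ≤ (X k).max' hne := by
      obtain ⟨y, hy, hyd⟩ := hdense ℓ ⟨hℓ.le, le_refl ℓ⟩
      have := Finset.le_max' (X k) y hy
      rw [Real.dist_eq, abs_of_nonneg (by linarith [(hsub' (Finset.mem_coe.2 hy)).2])] at hyd
      linarith
    have hchain : ∀ x ∈ X k, (∃ z ∈ X k, x < z) → ∃ y ∈ X k, x < y ∧ y - x ≤ 3 * ε := by
      rintro x hx ⟨z, hz, hxz⟩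
      have hx0 : 0 ≤ x := (hsub' (Finset.mem_coe.2 hx)).1
      have hxM : x < (X k).max' hne := lt_of_lt_of_le hxz (Finset.le_max' (X k) z hz)
      by_cases hcase : (X k).max' hne ≤ x + (3/2) * ε
      · exact ⟨(X k).max' hne, (X k).max'_mem hne, hxM, by linarith [hε0]⟩
      · push_neg at hcase
        obtain ⟨y, hy, hyd⟩ := hdense (x + (3/2) * ε)
          ⟨by linarith [hε0.le], by linarith [hMℓ]⟩
        rw [Real.dist_eq] at hyd
        have := abs_lt.1 hyd
        exact ⟨y, hy, by linarith [this.2], by linarith [this.1]⟩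
    obtain ⟨hl, hr⟩ := T_bounds (3 * ε) (by linarith) (X k) hne hchain
    rw [Real.dist_eq]
    have hc1 : 9 * ε^2 / 4 ≤ 1 := by nlinarith
    have h3 : ℓ/2 - ε ≤ ((X k).max' hne - (X k).min' hne) / 2 := by linarith
    have h4 : (ℓ/2 - ε) * (1 - 9 * ε^2/4)
        ≤ ((X k).max' hne - (X k).min' hne) / 2 * (1 - 9 * ε^2/4) :=
      mul_le_mul_of_nonneg_right h3 (by linarith)
    have hl' : (ℓ/2 - ε) * (1 - 9 * ε^2/4) ≤ (∑ x ∈ X k, wt (X k) x) - 1 := by nlinarith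
    have hub2 : (∑ x ∈ X k, wt (X k) x) - 1 ≤ ℓ/2 := by linarith
    have hsq : ε^2 ≤ (2/3) * ε := by nlinarith
    have hη2 : ε * (2 * (1 + ℓ)) ≤ η := (le_div_iff₀ (by linarith)).1 hεη
    rw [abs_lt]
    constructor
    · nlinarith
    · nlinarith
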